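/- Let X and Y be Hilbert spaces, A : X → X' , B : X → Y', C : Y → Y' continuous linear operators such that A is non-negative and X-coercive on ker(B), B satisfies the inf-sup condition, and C is non-negative and symmetric. Then for every F₁ ∈ X' and F₂ ∈ Y' the system A x + B' y = F₁, −B x + C y = F₂ has a unique solution (x, y) ∈ X × Y, and this solution satisfies ‖x‖_X + ‖y‖_Y ≤ c (‖F₁‖_{X'} + ‖F₂‖_{Y'}) for a constant c independent of F₁, F₂. -/

import Mathlib

open scoped InnerProductSpace
open ContinuousLinearMap

set_option linter.unusedSectionVars false
set_option maxHeartbeats 1000000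


/-- Pure real-number combination step for the Babuska-Brezzi estimate. -/
lemma bb_arith {K α β na nc F s u nx0 nx1 nx ny : ℝ}
    (hK1 : 1 ≤ K) (hKa : na ≤ K) (hKc : nc ≤ K) (hKα : 1 ≤ α * K) (hKβ : 1 ≤ β * K)
    (hna : 0 ≤ na) (hF0 : 0 ≤ F) (hs0 : 0 ≤ s)
    (hnx0 : 0 ≤ nx0) (hnx1 : 0 ≤ nx1) (hnx : 0 ≤ nx) (hny : 0 ≤ ny) (hu0 : 0 ≤ u)
    (hsFN : s ≤ F * (nx + ny))
    (hu2 : u ^ 2 ≤ nc * s)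
    (hxle : nx ≤ nx0 + nx1)
    (hx1 : β * nx1 ≤ u + F)
    (hx0 : α * nx0 ≤ F + na * nx1)
    (hy : β * ny ≤ F + na * nx) :
    nx + ny ≤ 63 * K ^ 11 * F := by
  have hK0 : (0 : ℝ) < K := lt_of_lt_of_le one_pos hK1
  set N : ℝ := nx + ny with hN
  have hN0 : 0 ≤ N := by positivity
  have hu2' : u ^ 2 ≤ K * s := le_trans hu2 (mul_le_mul_of_nonneg_right hKc hs0)
  have hKK3 : K ≤ K ^ 3 := by
    calc K = K ^ 1 := (pow_one K).symm
    _ ≤ K ^ 3 := pow_le_pow_right₀ hK1 (by norm_num)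
  have hK35 : K ^ 3 ≤ K ^ 5 := pow_le_pow_right₀ hK1 (by norm_num)
  have hKK5 : K ≤ K ^ 5 := by
    calc K = K ^ 1 := (pow_one K).symm
    _ ≤ K ^ 5 := pow_le_pow_right₀ hK1 (by norm_num)
  have hK511 : K ^ 5 ≤ K ^ 11 := pow_le_pow_right₀ hK1 (by norm_num)
  have e1 : nx1 ≤ K * (u + F) := by
    have h1 : 1 * nx1 ≤ (β * K) * nx1 := mul_le_mul_of_nonneg_right hKβ hnx1
    have h2 : K * (β * nx1) ≤ K * (u + F) := mul_le_mul_of_nonneg_left hx1 hK0.le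
    nlinarith
  have e2 : nx0 ≤ 2 * K ^ 3 * (F + u) := by
    have h1 : 1 * nx0 ≤ (α * K) * nx0 := mul_le_mul_of_nonneg_right hKα hnx0
    have h2 : K * (α * nx0) ≤ K * (F + na * nx1) := mul_le_mul_of_nonneg_left hx0 hK0.le
    have h3 : na * nx1 ≤ K * (K * (u + F)) := mul_le_mul hKa e1 hnx1 hK0.le
    have h4 : K * F ≤ K ^ 3 * F := mul_le_mul_of_nonneg_right hKK3 hF0
    nlinarith [mul_le_mul_of_nonneg_left h3 hK0.le, mul_nonneg (pow_nonneg hK0.le 3) hu0,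
      mul_nonneg (pow_nonneg hK0.le 3) hF0]
  have e3 : nx ≤ 3 * K ^ 3 * (F + u) := by
    have h2 : K * (u + F) ≤ K ^ 3 * (u + F) :=
      mul_le_mul_of_nonneg_right hKK3 (by positivity)
    nlinarith
  have e4 : ny ≤ 4 * K ^ 5 * (F + u) := by
    have h1 : 1 * ny ≤ (β * K) * ny := mul_le_mul_of_nonneg_right hKβ hny
    have h2 : K * (β * ny) ≤ K * (F + na * nx) := mul_le_mul_of_nonneg_left hy hK0.le
    have h3 : na * nx ≤ K * (3 * K ^ 3 * (F + u)) := mul_le_mul hKa e3 hnx hK0.le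
    have h4 : K * F ≤ K ^ 5 * F := mul_le_mul_of_nonneg_right hKK5 hF0
    nlinarith [mul_le_mul_of_nonneg_left h3 hK0.le, mul_nonneg (pow_nonneg hK0.le 5) hu0,
      mul_nonneg (pow_nonneg hK0.le 5) hF0]
  have e5 : N ≤ 7 * K ^ 5 * (F + u) := by
    have h1 : K ^ 3 * (F + u) ≤ K ^ 5 * (F + u) :=
      mul_le_mul_of_nonneg_right hK35 (by positivity)
    rw [hN]; nlinarith
  have e6 : (7 * K ^ 5 * u) ^ 2 ≤ (49 * K ^ 11 * F) * N := by
    have h1 : 49 * K ^ 10 * u ^ 2 ≤ 49 * K ^ 10 * (K * s) :=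
      mul_le_mul_of_nonneg_left hu2' (by positivity)
    have h2 : 49 * K ^ 11 * s ≤ 49 * K ^ 11 * (F * N) :=
      mul_le_mul_of_nonneg_left hsFN (by positivity)
    nlinarith
  have e7 : 2 * (7 * K ^ 5 * u) ≤ 49 * K ^ 11 * F + N := by
    have hr0 : 0 ≤ 7 * K ^ 5 * u := by positivity
    have hp0 : 0 ≤ 49 * K ^ 11 * F := by positivity
    nlinarith [sq_nonneg (49 * K ^ 11 * F - N)]
  have e8 : N ≤ (14 * K ^ 5 + 49 * K ^ 11) * F := by nlinarith
  nlinarith [mul_le_mul_of_nonneg_right hK511 hF0]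

section Aux
variable {X Y : Type*} [NormedAddCommGroup X] [InnerProductSpace ℝ X] [CompleteSpace X]
  [NormedAddCommGroup Y] [InnerProductSpace ℝ Y] [CompleteSpace Y]

/-- Cauchy-Schwarz for a nonneg symmetric operator. -/
lemma bb_cs (c : Y →L[ℝ] Y) (hc0 : ∀ y, 0 ≤ ⟪c y, y⟫_ℝ)
    (hcs : ∀ y z, ⟪c y, z⟫_ℝ = ⟪c z, y⟫_ℝ) (u v : Y) :
    ⟪c u, v⟫_ℝ ^ 2 ≤ ⟪c u, u⟫_ℝ * ⟪c v, v⟫_ℝ := by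
  have key : ∀ t : ℝ, 0 ≤ ⟪c v, v⟫_ℝ * (t * t) + (2 * ⟪c u, v⟫_ℝ) * t + ⟪c u, u⟫_ℝ := by
    intro t
    have h := hc0 (u + t • v)
    have expand : ⟪c (u + t • v), u + t • v⟫_ℝ
        = ⟪c v, v⟫_ℝ * (t * t) + (2 * ⟪c u, v⟫_ℝ) * t + ⟪c u, u⟫_ℝ := by
      simp only [map_add, map_smul, inner_add_left, inner_add_right,
        real_inner_smul_left, real_inner_smul_right]
      linear_combination t * hcs v u
    linarith [expand ▸ h]
  have hd := discrim_le_zero key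
  unfold discrim at hd
  nlinarith
lemma bb_below (b : X →L[ℝ] Y) {β : ℝ} (hβ : 0 < β)
    (h : ∀ y, β * ‖y‖ ≤ ‖adjoint b y‖) :
    ∀ x ∈ (LinearMap.ker (b : X →ₗ[ℝ] Y))ᗮ, β * ‖x‖ ≤ ‖b x‖ := by
  -- the adjoint is antilipschitz, hence has closed range
  have hanti : AntilipschitzWith (⟨β, hβ.le⟩ : NNReal)⁻¹ (adjoint b) := by
    refine AddMonoidHomClass.antilipschitz_of_bound _ (fun y => ?_)
    change ‖y‖ ≤ β⁻¹ * ‖adjoint b y‖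
    rw [inv_mul_eq_div, le_div_iff₀ hβ, mul_comm]
    exact h y
  have hclosed : IsClosed (Set.range (adjoint b)) :=
    hanti.isClosed_range (adjoint b).uniformContinuous
  have hrange : (LinearMap.range (adjoint b : Y →ₗ[ℝ] X) : Submodule ℝ X) = (LinearMap.ker (b : X →ₗ[ℝ] Y))ᗮ := by
    have h1 : ((LinearMap.range (adjoint b : Y →ₗ[ℝ] X))ᗮ : Submodule ℝ X) = LinearMap.ker (b : X →ₗ[ℝ] Y) := by
      ext x
      simp only [Submodule.mem_orthogonal, LinearMap.mem_range, LinearMap.mem_ker]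
      constructor
      · intro hx
        apply ext_inner_right ℝ
        intro y
        change ⟪b x, y⟫_ℝ = ⟪0, y⟫_ℝ
        rw [inner_zero_left, ← adjoint_inner_right, real_inner_comm]
        exact hx (adjoint b y) ⟨y, rfl⟩
      · rintro hbx u ⟨y, rfl⟩
        change b x = 0 at hbx
        change ⟪adjoint b y, x⟫_ℝ = 0
        rw [real_inner_comm, adjoint_inner_right, hbx, inner_zero_left]
    calc (LinearMap.range (adjoint b : Y →ₗ[ℝ] X) : Submodule ℝ X)
        = (LinearMap.range (adjoint b : Y →ₗ[ℝ] X)).topologicalClosure := by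
          rw [IsClosed.submodule_topologicalClosure_eq]
          exact hclosed
      _ = (LinearMap.range (adjoint b : Y →ₗ[ℝ] X))ᗮᗮ := (Submodule.orthogonal_orthogonal_eq_closure _).symm
      _ = (LinearMap.ker (b : X →ₗ[ℝ] Y))ᗮ := by rw [h1]
  intro x hx
  rw [← hrange] at hx
  obtain ⟨y, hy⟩ := hx
  change adjoint b y = x at hy
  rcases eq_or_ne x 0 with rfl | hx0
  · simp
  have h1 : ‖x‖ ^ 2 = ⟪y, b x⟫_ℝ := by
    rw [← adjoint_inner_left, hy, real_inner_self_eq_norm_sq]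
  have h2 : ⟪y, b x⟫_ℝ ≤ ‖y‖ * ‖b x‖ := real_inner_le_norm _ _
  have h3 : β * ‖y‖ ≤ ‖x‖ := by rw [← hy]; exact h y
  have hxpos : 0 < ‖x‖ := norm_pos_iff.mpr hx0
  have hbnn : 0 ≤ ‖b x‖ := norm_nonneg _
  nlinarith [norm_nonneg y]
end Aux

section Aux
variable {X Y : Type*} [NormedAddCommGroup X] [InnerProductSpace ℝ X] [CompleteSpace X]
  [NormedAddCommGroup Y] [InnerProductSpace ℝ Y] [CompleteSpace Y]

lemma bb_estimate (a : X →L[ℝ] X) (b : X →L[ℝ] Y) (c : Y →L[ℝ] Y)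
    (ha0 : ∀ x, 0 ≤ ⟪a x, x⟫_ℝ)
    (hacoer : ∃ α > 0, ∀ x, b x = 0 → α * ‖x‖ ^ 2 ≤ ⟪a x, x⟫_ℝ)
    (hinfsup : ∃ β > 0, ∀ y, β * ‖y‖ ≤ ‖adjoint b y‖)
    (hc0 : ∀ y, 0 ≤ ⟪c y, y⟫_ℝ)
    (hcs : ∀ y z, ⟪c y, z⟫_ℝ = ⟪c z, y⟫_ℝ) :
    ∃ γ > 0, ∀ x y, ‖x‖ + ‖y‖ ≤ γ * (‖a x + adjoint b y‖ + ‖-(b x) + c y‖) := by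
  obtain ⟨α, hα, hcoer⟩ := hacoer
  obtain ⟨β, hβ, hβ'⟩ := hinfsup
  set K : ℝ := max 1 (max ‖a‖ (max ‖c‖ (max α⁻¹ β⁻¹))) with hKdef
  have hK1 : (1 : ℝ) ≤ K := le_max_left _ _
  have hK0 : (0 : ℝ) < K := lt_of_lt_of_le one_pos hK1
  have hKa : ‖a‖ ≤ K := le_trans (le_max_left _ _) (le_max_right _ _)
  have hKc : ‖c‖ ≤ K := le_trans (le_trans (le_max_left _ _) (le_max_right _ _)) (le_max_right _ _)
  have hKα : (1 : ℝ) ≤ α * K := by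
    have : α⁻¹ ≤ K :=
      le_trans (le_trans (le_trans (le_max_left _ _) (le_max_right _ _)) (le_max_right _ _))
        (le_max_right _ _)
    rw [← mul_le_mul_iff_right₀ hα] at this
    simpa [mul_inv_cancel₀ hα.ne'] using this
  have hKβ : (1 : ℝ) ≤ β * K := by
    have : β⁻¹ ≤ K :=
      le_trans (le_trans (le_trans (le_max_right _ _) (le_max_right _ _)) (le_max_right _ _))
        (le_max_right _ _)
    rw [← mul_le_mul_iff_right₀ hβ] at this
    simpa [mul_inv_cancel₀ hβ.ne'] using this
  refine ⟨63 * K ^ 11, by positivity, fun x y => ?_⟩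
  have hKer : IsClosed ((LinearMap.ker (b : X →ₗ[ℝ] Y) : Submodule ℝ X) : Set X) :=
    ContinuousLinearMap.isClosed_ker b
  haveI : CompleteSpace (LinearMap.ker (b : X →ₗ[ℝ] Y) : Submodule ℝ X) := hKer.completeSpace_coe
  obtain ⟨x₀, hx₀mem, x₁, hx₁mem, hxsum⟩ :
      ∃ x₀ ∈ (LinearMap.ker (b : X →ₗ[ℝ] Y) : Submodule ℝ X), ∃ x₁ ∈ (LinearMap.ker (b : X →ₗ[ℝ] Y) : Submodule ℝ X)ᗮ,
        x = x₀ + x₁ :=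
    ⟨(Submodule.orthogonalProjection (LinearMap.ker (b : X →ₗ[ℝ] Y)) x : X), Submodule.coe_mem _,
      x - (Submodule.orthogonalProjection (LinearMap.ker (b : X →ₗ[ℝ] Y)) x : X),
      Submodule.sub_starProjection_mem_orthogonal (K := LinearMap.ker (b : X →ₗ[ℝ] Y)) x, by abel⟩
  have hbx₀ : b x₀ = 0 := hx₀mem
  -- energy identity
  have henergy : ⟪a x, x⟫_ℝ + ⟪c y, y⟫_ℝ
      = ⟪a x + adjoint b y, x⟫_ℝ + ⟪-(b x) + c y, y⟫_ℝ := by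
    rw [inner_add_left, inner_add_left, adjoint_inner_left, inner_neg_left]
    have h := real_inner_comm (b x) y
    linarith
  have hsFN : ⟪c y, y⟫_ℝ ≤ (‖a x + adjoint b y‖ + ‖-(b x) + c y‖) * (‖x‖ + ‖y‖) := by
    have h1 : ⟪a x + adjoint b y, x⟫_ℝ ≤ ‖a x + adjoint b y‖ * ‖x‖ := real_inner_le_norm _ _
    have h2 : ⟪-(b x) + c y, y⟫_ℝ ≤ ‖-(b x) + c y‖ * ‖y‖ := real_inner_le_norm _ _
    have h3 := ha0 x
    nlinarith [norm_nonneg (a x + adjoint b y), norm_nonneg (-(b x) + c y),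
      norm_nonneg x, norm_nonneg y]
  -- bound on ‖c y‖²
  have hu2 : ‖c y‖ ^ 2 ≤ ‖c‖ * ⟪c y, y⟫_ℝ := by
    have h1 := bb_cs c hc0 hcs y (c y)
    have h2 : ⟪c y, c y⟫_ℝ = ‖c y‖ ^ 2 := real_inner_self_eq_norm_sq _
    have h3 : ⟪c (c y), c y⟫_ℝ ≤ ‖c‖ * ‖c y‖ * ‖c y‖ := by
      have h4 := real_inner_le_norm (c (c y)) (c y)
      have h5 := c.le_opNorm (c y)
      nlinarith [norm_nonneg (c (c y)), norm_nonneg (c y)]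
    rw [h2] at h1
    rcases eq_or_lt_of_le (norm_nonneg (c y)) with h | h
    · rw [← h]; simp only [ne_eq, OfNat.ofNat_ne_zero, not_false_eq_true, zero_pow]
      exact mul_nonneg (norm_nonneg _) (hc0 y)
    · have hpos : (0 : ℝ) < ‖c y‖ ^ 2 := by positivity
      have h6 : ‖c y‖ ^ 2 * ‖c y‖ ^ 2 ≤ ‖c‖ * ⟪c y, y⟫_ℝ * ‖c y‖ ^ 2 := by nlinarith [hc0 y]
      exact (mul_le_mul_iff_left₀ hpos).mp h6
  -- bound on x₁
  have hbx₁ : b x₁ = b x := by rw [hxsum, map_add, hbx₀, zero_add]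
  have hx₁bnd : β * ‖x₁‖ ≤ ‖c y‖ + (‖a x + adjoint b y‖ + ‖-(b x) + c y‖) := by
    have h1 := bb_below b hβ hβ' x₁ hx₁mem
    have h2 : b x₁ = c y - (-(b x) + c y) := by rw [hbx₁]; abel
    have h3 : ‖b x₁‖ ≤ ‖c y‖ + ‖-(b x) + c y‖ := by
      rw [h2]; exact norm_sub_le _ _
    have h4 : (0:ℝ) ≤ ‖a x + adjoint b y‖ := norm_nonneg _
    linarith
  -- bound on x₀
  have hx₀bnd : α * ‖x₀‖ ≤ (‖a x + adjoint b y‖ + ‖-(b x) + c y‖) + ‖a‖ * ‖x₁‖ := by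
    have hcoer0 := hcoer x₀ hbx₀
    have h1 : ⟪a x + adjoint b y, x₀⟫_ℝ = ⟪a x, x₀⟫_ℝ := by
      rw [inner_add_left, adjoint_inner_left, hbx₀, inner_zero_right, add_zero]
    have h2 : ⟪a x₀, x₀⟫_ℝ = ⟪a x, x₀⟫_ℝ - ⟪a x₁, x₀⟫_ℝ := by
      rw [hxsum, map_add, inner_add_left]; ring
    have h3 : ⟪a x, x₀⟫_ℝ ≤ ‖a x + adjoint b y‖ * ‖x₀‖ := h1 ▸ real_inner_le_norm _ _
    have h4 : -⟪a x₁, x₀⟫_ℝ ≤ ‖a‖ * ‖x₁‖ * ‖x₀‖ := by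
      have h5 := abs_real_inner_le_norm (a x₁) x₀
      have h6 := a.le_opNorm x₁
      have h7 := neg_abs_le ⟪a x₁, x₀⟫_ℝ
      nlinarith [norm_nonneg x₀, norm_nonneg (a x₁), abs_nonneg ⟪a x₁, x₀⟫_ℝ]
    rcases eq_or_lt_of_le (norm_nonneg x₀) with h | h
    · rw [← h, mul_zero]
      have := norm_nonneg (-(b x) + c y)
      have := norm_nonneg (a x + adjoint b y)
      have := mul_nonneg (norm_nonneg a) (norm_nonneg x₁)
      linarith
    · have key : α * ‖x₀‖ ^ 2 ≤ ((‖a x + adjoint b y‖ + ‖-(b x) + c y‖) + ‖a‖ * ‖x₁‖) * ‖x₀‖ := by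
        nlinarith [norm_nonneg (-(b x) + c y), mul_nonneg (norm_nonneg x₀)
          (norm_nonneg (-(b x) + c y))]
      nlinarith
  -- bound on y
  have hybnd : β * ‖y‖ ≤ (‖a x + adjoint b y‖ + ‖-(b x) + c y‖) + ‖a‖ * ‖x‖ := by
    have h2 : ‖adjoint b y‖ ≤ ‖a x + adjoint b y‖ + ‖a‖ * ‖x‖ := by
      calc ‖adjoint b y‖ = ‖(a x + adjoint b y) - a x‖ := by rw [add_sub_cancel_left]
      _ ≤ ‖a x + adjoint b y‖ + ‖a x‖ := norm_sub_le _ _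
      _ ≤ _ := by linarith [a.le_opNorm x]
    have h3 := norm_nonneg (-(b x) + c y)
    linarith [hβ' y]
  -- combine
  have hxle : ‖x‖ ≤ ‖x₀‖ + ‖x₁‖ := hxsum ▸ norm_add_le _ _
  exact bb_arith hK1 hKa hKc hKα hKβ (norm_nonneg a) (by positivity) (hc0 y)
    (norm_nonneg x₀) (norm_nonneg x₁) (norm_nonneg x) (norm_nonneg y) (norm_nonneg (c y))
    hsFN hu2 hxle hx₁bnd hx₀bnd hybnd
end Aux

section Main
variable {X Y : Type*} [NormedAddCommGroup X] [InnerProductSpace ℝ X] [CompleteSpace X]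
  [NormedAddCommGroup Y] [InnerProductSpace ℝ Y] [CompleteSpace Y]

lemma bb_surj (a : X →L[ℝ] X) (b : X →L[ℝ] Y) (c : Y →L[ℝ] Y)
    (ha0 : ∀ x, 0 ≤ ⟪a x, x⟫_ℝ)
    (hacoer : ∃ α > 0, ∀ x, b x = 0 → α * ‖x‖ ^ 2 ≤ ⟪a x, x⟫_ℝ)
    (hinfsup : ∃ β > 0, ∀ y, β * ‖y‖ ≤ ‖adjoint b y‖)
    (hc0 : ∀ y, 0 ≤ ⟪c y, y⟫_ℝ)
    (hcs : ∀ y z, ⟪c y, z⟫_ℝ = ⟪c z, y⟫_ℝ) :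
    ∀ (f₁ : X) (f₂ : Y), ∃ (x : X) (y : Y), a x + adjoint b y = f₁ ∧ -(b x) + c y = f₂ := by
  -- facts about adjoints
  have ha0' : ∀ x, 0 ≤ ⟪adjoint a x, x⟫_ℝ := by
    intro x; rw [adjoint_inner_left, real_inner_comm]; exact ha0 x
  have hacoer' : ∃ α > 0, ∀ x, b x = 0 → α * ‖x‖ ^ 2 ≤ ⟪adjoint a x, x⟫_ℝ := by
    obtain ⟨α, hα, h⟩ := hacoer
    exact ⟨α, hα, fun x hx => by
      rw [adjoint_inner_left, real_inner_comm]; exact h x hx⟩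
  have hcadj : adjoint c = c := by
    ext w
    apply ext_inner_right ℝ
    intro y
    rw [adjoint_inner_left, real_inner_comm, hcs]
  obtain ⟨γ₁, hγ₁, hest₁⟩ := bb_estimate a b c ha0 hacoer hinfsup hc0 hcs
  obtain ⟨γ₂, hγ₂, hest₂⟩ := bb_estimate (adjoint a) b c ha0' hacoer' hinfsup hc0 hcs
  intro f₁ f₂
  -- the system operator on the L² product
  let e := WithLp.prodContinuousLinearEquiv 2 ℝ X Y
  let T₀ : X × Y →L[ℝ] X × Y :=
    ((a.comp (ContinuousLinearMap.fst ℝ X Y)) +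
      ((adjoint b).comp (ContinuousLinearMap.snd ℝ X Y))).prod
    ((-(b.comp (ContinuousLinearMap.fst ℝ X Y))) + c.comp (ContinuousLinearMap.snd ℝ X Y))
  let T : WithLp 2 (X × Y) →L[ℝ] WithLp 2 (X × Y) :=
    (e.symm.toContinuousLinearMap).comp (T₀.comp e.toContinuousLinearMap)
  have hT1 : ∀ z : WithLp 2 (X × Y), (T z).fst = a z.fst + adjoint b z.snd := fun z => rfl
  have hT2 : ∀ z : WithLp 2 (X × Y), (T z).snd = -(b z.fst) + c z.snd := fun z => rfl
  -- norm comparison on the product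
  have hnorm1 : ∀ z : WithLp 2 (X × Y), ‖z‖ ≤ ‖z.fst‖ + ‖z.snd‖ := by
    intro z
    have h := WithLp.prod_norm_sq_eq_of_L2 z
    nlinarith [norm_nonneg z, norm_nonneg z.fst, norm_nonneg z.snd,
      mul_nonneg (norm_nonneg z.fst) (norm_nonneg z.snd)]
  have hnorm2 : ∀ z : WithLp 2 (X × Y), ‖z.fst‖ ≤ ‖z‖ ∧ ‖z.snd‖ ≤ ‖z‖ := by
    intro z
    have h := WithLp.prod_norm_sq_eq_of_L2 z
    constructor <;>
      nlinarith [norm_nonneg z, norm_nonneg z.fst, norm_nonneg z.snd]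
  -- T is bounded below, hence has closed range
  have hbelow : ∀ z, ‖z‖ ≤ 2 * γ₁ * ‖T z‖ := by
    intro z
    have h1 := hest₁ z.fst z.snd
    rw [← hT1 z, ← hT2 z] at h1
    have h2 := (hnorm2 (T z)).1
    have h3 := (hnorm2 (T z)).2
    have h4 := hnorm1 z
    nlinarith [norm_nonneg (T z)]
  have hanti : AntilipschitzWith (⟨2 * γ₁, by positivity⟩ : NNReal) T :=
    AddMonoidHomClass.antilipschitz_of_bound _ (fun z => by
      exact hbelow z)
  have hclosed : IsClosed (Set.range T) := hanti.isClosed_range T.uniformContinuous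
  -- orthogonal complement of the range is trivial
  have hperp : (LinearMap.range (T : WithLp 2 (X × Y) →ₗ[ℝ] WithLp 2 (X × Y)))ᗮ = ⊥ := by
    rw [Submodule.eq_bot_iff]
    intro z hz
    rw [Submodule.mem_orthogonal] at hz
    have hz' : ∀ ζ, ⟪T ζ, z⟫_ℝ = 0 := fun ζ => hz (T ζ) (LinearMap.mem_range_self _ ζ)
    have hz'' : ∀ x y, ⟪a x + adjoint b y, z.fst⟫_ℝ + ⟪-(b x) + c y, z.snd⟫_ℝ = 0 := by
      intro x y
      have := hz' ((WithLp.equiv 2 (X × Y)).symm (x, y))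
      rw [WithLp.prod_inner_apply] at this
      exact this
    have h1 : ∀ x : X, ⟪a x, z.fst⟫_ℝ - ⟪b x, z.snd⟫_ℝ = 0 := by
      intro x
      have := hz'' x 0
      simpa [inner_neg_left, sub_eq_add_neg] using this
    have h2 : ∀ y : Y, ⟪adjoint b y, z.fst⟫_ℝ + ⟪c y, z.snd⟫_ℝ = 0 := by
      intro y
      have := hz'' 0 y
      simpa using this
    have hv : adjoint a z.fst + adjoint b (-(z.snd)) = 0 := by
      apply ext_inner_right ℝ
      intro x
      have e1 : ⟪adjoint a z.fst, x⟫_ℝ = ⟪a x, z.fst⟫_ℝ := by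
        rw [adjoint_inner_left, real_inner_comm]
      have e2 : ⟪adjoint b (-(z.snd)), x⟫_ℝ = -⟪b x, z.snd⟫_ℝ := by
        rw [adjoint_inner_left, inner_neg_left, real_inner_comm]
      rw [inner_add_left, inner_zero_left, e1, e2]
      linarith [h1 x]
    have hw : -(b z.fst) + c (-(z.snd)) = 0 := by
      apply ext_inner_right ℝ
      intro y
      have e1 : ⟪b z.fst, y⟫_ℝ = ⟪adjoint b y, z.fst⟫_ℝ := by
        rw [adjoint_inner_left]; exact real_inner_comm _ _
      have e2 : ⟪c (-(z.snd)), y⟫_ℝ = -⟪c y, z.snd⟫_ℝ := by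
        rw [map_neg, inner_neg_left, hcs]
      rw [inner_add_left, inner_zero_left, inner_neg_left, e2]
      linarith [h2 y]
    have hzero := hest₂ z.fst (-(z.snd))
    rw [hv, hw] at hzero
    simp only [norm_zero, add_zero, mul_zero] at hzero
    have hf : ‖z.fst‖ = 0 := le_antisymm (by linarith [norm_nonneg (-(z.snd))]) (norm_nonneg _)
    have hs : ‖z.snd‖ = 0 := by
      have := norm_neg (z.snd)
      have : ‖(-(z.snd))‖ = 0 := le_antisymm (by linarith [norm_nonneg z.fst]) (norm_nonneg _)
      rwa [norm_neg] at this
    have : ‖z‖ = 0 := by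
      have h := WithLp.prod_norm_sq_eq_of_L2 z
      rw [hf, hs] at h
      nlinarith [norm_nonneg z]
    exact norm_eq_zero.mp this
  -- hence T is surjective
  have hrange : LinearMap.range (T : WithLp 2 (X × Y) →ₗ[ℝ] WithLp 2 (X × Y)) = ⊤ := by
    have h1 : (LinearMap.range (T : WithLp 2 (X × Y) →ₗ[ℝ] WithLp 2 (X × Y))).topologicalClosure = LinearMap.range (T : WithLp 2 (X × Y) →ₗ[ℝ] WithLp 2 (X × Y)) :=
      IsClosed.submodule_topologicalClosure_eq (by rwa [LinearMap.coe_range])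
    rw [← h1, ← Submodule.orthogonal_orthogonal_eq_closure, hperp,
      Submodule.bot_orthogonal_eq_top]
  obtain ⟨z, hzeq⟩ :=
    LinearMap.range_eq_top.mp hrange ((WithLp.equiv 2 (X × Y)).symm (f₁, f₂))
  refine ⟨z.fst, z.snd, ?_, ?_⟩
  · rw [← hT1 z, show T z = _ from hzeq]
    rfl
  · rw [← hT2 z, show T z = _ from hzeq]
    rfl

end Main

/-- Babuska–Brezzi theorem: well-posedness of the abstract mixed problem.
`X`, `Y` are real Hilbert spaces; `A : X → X'`, `B : X → Y'`, `C : Y → Y'` are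
bounded bilinear operators. `A` is non-negative and coercive on `ker B`,
`B` satisfies the inf-sup condition (expressed via the operator norm of `B.flip y`,
which equals `sup_{x ≠ 0} |B x y| / ‖x‖`), and `C` is non-negative and symmetric.
Then for all data `F₁ ∈ X'`, `F₂ ∈ Y'` the system
`A x + B' y = F₁`, `-B x + C y = F₂` has a unique solution, which satisfies
`‖x‖ + ‖y‖ ≤ c (‖F₁‖ + ‖F₂‖)` with `c` independent of the data. -/
theorem stmt_0
    {X Y : Type*} [NormedAddCommGroup X] [InnerProductSpace ℝ X] [CompleteSpace X]
    [NormedAddCommGroup Y] [InnerProductSpace ℝ Y] [CompleteSpace Y]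
    (A : X →L[ℝ] X →L[ℝ] ℝ) (B : X →L[ℝ] Y →L[ℝ] ℝ) (C : Y →L[ℝ] Y →L[ℝ] ℝ)
    (hAnonneg : ∀ x : X, 0 ≤ A x x)
    (hAcoer : ∃ α > 0, ∀ x : X, (∀ w : Y, B x w = 0) → α * ‖x‖ ^ 2 ≤ A x x)
    (hinfsup : ∃ β > 0, ∀ y : Y, β * ‖y‖ ≤ ‖B.flip y‖)
    (hCnonneg : ∀ y : Y, 0 ≤ C y y)
    (hCsymm : ∀ y z : Y, C y z = C z y) :
    ∃ c > 0, ∀ (F₁ : X →L[ℝ] ℝ) (F₂ : Y →L[ℝ] ℝ),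
      (∃! p : X × Y,
        (∀ v : X, A p.1 v + B v p.2 = F₁ v) ∧
        (∀ w : Y, -B p.1 w + C p.2 w = F₂ w)) ∧
      (∀ p : X × Y,
        ((∀ v : X, A p.1 v + B v p.2 = F₁ v) ∧
         (∀ w : Y, -B p.1 w + C p.2 w = F₂ w)) →
        ‖p.1‖ + ‖p.2‖ ≤ c * (‖F₁‖ + ‖F₂‖)) := by
  classical
  set ιX := InnerProductSpace.toDual ℝ X with hιX
  set ιY := InnerProductSpace.toDual ℝ Y with hιY
  set a : X →L[ℝ] X := (ιX.symm.toLinearIsometry.toContinuousLinearMap).comp A with ha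
  set b : X →L[ℝ] Y := (ιY.symm.toLinearIsometry.toContinuousLinearMap).comp B with hb
  set c : Y →L[ℝ] Y := (ιY.symm.toLinearIsometry.toContinuousLinearMap).comp C with hc
  have inner_a : ∀ x v, ⟪a x, v⟫_ℝ = A x v := fun x v =>
    InnerProductSpace.toDual_symm_apply
  have inner_b : ∀ x w, ⟪b x, w⟫_ℝ = B x w := fun x w =>
    InnerProductSpace.toDual_symm_apply
  have inner_c : ∀ y w, ⟪c y, w⟫_ℝ = C y w := fun y w =>
    InnerProductSpace.toDual_symm_apply
  have badj : ∀ (y : Y) (v : X), ⟪ContinuousLinearMap.adjoint b y, v⟫_ℝ = B v y := by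
    intro y v
    rw [ContinuousLinearMap.adjoint_inner_left, real_inner_comm]
    exact inner_b v y
  have adjnorm : ∀ y : Y, ‖ContinuousLinearMap.adjoint b y‖ = ‖B.flip y‖ := by
    intro y
    have h : ContinuousLinearMap.adjoint b y = ιX.symm (B.flip y) := by
      apply ext_inner_right ℝ
      intro v
      rw [badj, InnerProductSpace.toDual_symm_apply]
      rfl
    rw [h]
    exact ιX.symm.norm_map _
  -- hypotheses in operator form
  have ha0 : ∀ x, 0 ≤ ⟪a x, x⟫_ℝ := fun x => by rw [inner_a]; exact hAnonneg x
  have hacoer' : ∃ α > 0, ∀ x, b x = 0 → α * ‖x‖ ^ 2 ≤ ⟪a x, x⟫_ℝ := by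
    obtain ⟨α, hα, h⟩ := hAcoer
    refine ⟨α, hα, fun x hbx => ?_⟩
    rw [inner_a]
    exact h x (fun w => by rw [← inner_b x w, hbx, inner_zero_left])
  have hinfsup' : ∃ β > 0, ∀ y, β * ‖y‖ ≤ ‖ContinuousLinearMap.adjoint b y‖ := by
    obtain ⟨β, hβ, h⟩ := hinfsup
    exact ⟨β, hβ, fun y => by rw [adjnorm]; exact h y⟩
  have hc0 : ∀ y, 0 ≤ ⟪c y, y⟫_ℝ := fun y => by rw [inner_c]; exact hCnonneg y
  have hcs : ∀ y z, ⟪c y, z⟫_ℝ = ⟪c z, y⟫_ℝ := fun y z => by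
    rw [inner_c, inner_c]; exact hCsymm y z
  -- equation translations
  have eq1 : ∀ (x : X) (y : Y) (F₁ : X →L[ℝ] ℝ),
      (∀ v, A x v + B v y = F₁ v) ↔ a x + ContinuousLinearMap.adjoint b y = ιX.symm F₁ := by
    intro x y F₁
    constructor
    · intro h
      apply ext_inner_right ℝ
      intro v
      rw [inner_add_left, inner_a, badj, InnerProductSpace.toDual_symm_apply]
      exact h v
    · intro h v
      have h2 := congrArg (fun w => ⟪w, v⟫_ℝ) h
      rwa [inner_add_left, inner_a, badj, InnerProductSpace.toDual_symm_apply] at h2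
  have eq2 : ∀ (x : X) (y : Y) (F₂ : Y →L[ℝ] ℝ),
      (∀ w, -B x w + C y w = F₂ w) ↔ -(b x) + c y = ιY.symm F₂ := by
    intro x y F₂
    constructor
    · intro h
      apply ext_inner_right ℝ
      intro w
      rw [inner_add_left, inner_neg_left, inner_b, inner_c,
        InnerProductSpace.toDual_symm_apply]
      exact h w
    · intro h w
      have h2 := congrArg (fun u => ⟪u, w⟫_ℝ) h
      rwa [inner_add_left, inner_neg_left, inner_b, inner_c,
        InnerProductSpace.toDual_symm_apply] at h2
  obtain ⟨γ, hγ, hest⟩ := bb_estimate a b c ha0 hacoer' hinfsup' hc0 hcs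
  refine ⟨γ, hγ, fun F₁ F₂ => ⟨?_, ?_⟩⟩
  · -- existence and uniqueness
    obtain ⟨x, y, h1, h2⟩ :=
      bb_surj a b c ha0 hacoer' hinfsup' hc0 hcs (ιX.symm F₁) (ιY.symm F₂)
    refine ⟨(x, y), ⟨(eq1 x y F₁).mpr h1, (eq2 x y F₂).mpr h2⟩, ?_⟩
    rintro ⟨x', y'⟩ ⟨h1', h2'⟩
    have e1 := (eq1 x' y' F₁).mp h1'
    have e2 := (eq2 x' y' F₂).mp h2'
    have d1 : a (x' - x) + ContinuousLinearMap.adjoint b (y' - y) = 0 := by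
      rw [map_sub, map_sub]
      rw [show a x' - a x + (ContinuousLinearMap.adjoint b y' - ContinuousLinearMap.adjoint b y)
          = (a x' + ContinuousLinearMap.adjoint b y') - (a x + ContinuousLinearMap.adjoint b y)
        from by abel, e1, h1, sub_self]
    have d2 : -(b (x' - x)) + c (y' - y) = 0 := by
      rw [map_sub, map_sub]
      rw [show -(b x' - b x) + (c y' - c y) = (-(b x') + c y') - (-(b x) + c y) from by abel,
        e2, h2, sub_self]
    have hz := hest (x' - x) (y' - y)
    rw [d1, d2] at hz
    simp only [norm_zero, add_zero, mul_zero] at hz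
    have hx : x' = x := by
      have : ‖x' - x‖ = 0 :=
        le_antisymm (by linarith [norm_nonneg (y' - y)]) (norm_nonneg _)
      rw [← sub_eq_zero]
      exact norm_eq_zero.mp this
    have hy : y' = y := by
      have : ‖y' - y‖ = 0 :=
        le_antisymm (by linarith [norm_nonneg (x' - x)]) (norm_nonneg _)
      rw [← sub_eq_zero]
      exact norm_eq_zero.mp this
    exact Prod.ext hx hy
  · -- a priori estimate
    rintro ⟨x, y⟩ ⟨h1, h2⟩
    have e1 := (eq1 x y F₁).mp h1
    have e2 := (eq2 x y F₂).mp h2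
    have h := hest x y
    rw [e1, e2, ιX.symm.norm_map, ιY.symm.norm_map] at h
    exact h
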